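/- Let a, b ∈ R^m, λ ≥ 0 with |a^T b| > λ||b||_2 and define x_ls = (a^T b)/||a||_2² and δ = (λ²/||a||_2²) · (||a||_2²||b||_2² - (a^T b)²) / (||a||_2²(||a||_2² - λ²)). Then 0 ≤ δ < x_ls², so that x_ls ± √δ has the same sign as x_ls. -/

import Mathlib

noncomputable def norm2 {m : ℕ} (v : Fin m → ℝ) : ℝ := Real.sqrt (∑ k, v k ^ 2)
noncomputable def dot {m : ℕ} (u v : Fin m → ℝ) : ℝ := ∑ k, u k * v k

theorem delta_bounds_and_sign {m : ℕ} (a b : Fin m → ℝ)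
    (ha : a ≠ 0) (hb : b ≠ 0) (lam : ℝ) (hlam : 0 ≤ lam)
    (h : |dot a b| > lam * norm2 b)
    (xls δ : ℝ)
    (hxls : xls = dot a b / norm2 a ^ 2)
    (hδ : δ = (lam ^ 2 / norm2 a ^ 2) *
        ((norm2 a ^ 2 * norm2 b ^ 2 - (dot a b) ^ 2) /
          (norm2 a ^ 2 * (norm2 a ^ 2 - lam ^ 2)))) :
    0 ≤ δ ∧ δ < xls ^ 2 ∧
      Real.sign (xls + Real.sqrt δ) = Real.sign xls ∧
      Real.sign (xls - Real.sqrt δ) = Real.sign xls := by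
  set A := norm2 a ^ 2 with hA
  set B := norm2 b ^ 2 with hB
  set c := dot a b with hc
  have hA2 : A = ∑ k, a k ^ 2 := Real.sq_sqrt (by positivity)
  have hB2 : B = ∑ k, b k ^ 2 := Real.sq_sqrt (by positivity)
  have hApos : 0 < A := by
    rw [hA2]
    obtain ⟨k, hk⟩ := Function.ne_iff.mp ha
    exact Finset.sum_pos' (fun i _ => sq_nonneg _) ⟨k, Finset.mem_univ _, pow_two_pos_of_ne_zero hk⟩
  have hBpos : 0 < B := by
    rw [hB2]
    obtain ⟨k, hk⟩ := Function.ne_iff.mp hb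
    exact Finset.sum_pos' (fun i _ => sq_nonneg _) ⟨k, Finset.mem_univ _, pow_two_pos_of_ne_zero hk⟩
  have hCS : c ^ 2 ≤ A * B := by
    rw [hA2, hB2, hc, dot]
    exact Finset.sum_mul_sq_le_sq_mul_sq _ _ _
  have hnb : 0 ≤ norm2 b := Real.sqrt_nonneg _
  have hkey : lam ^ 2 * B < c ^ 2 := by
    have h1 : (lam * norm2 b) ^ 2 < |c| ^ 2 := by
      apply pow_lt_pow_left₀ h (by positivity)
      norm_num
    rw [sq_abs] at h1
    calc lam ^ 2 * B = (lam * norm2 b) ^ 2 := by ring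
      _ < c ^ 2 := h1
  have hc2pos : 0 < c ^ 2 := lt_of_le_of_lt (by positivity) hkey
  have hlamA : lam ^ 2 < A := by
    have : lam ^ 2 * B < A * B := lt_of_lt_of_le hkey hCS
    exact lt_of_mul_lt_mul_right this hBpos.le
  have hδ0 : 0 ≤ δ := by
    rw [hδ]
    have h1 : 0 ≤ A * B - c ^ 2 := by linarith
    have h2 : 0 < A * (A - lam ^ 2) := by
      apply mul_pos hApos; linarith
    positivity
  have hδlt : δ < xls ^ 2 := by
    rw [hδ, hxls, div_pow]
    have h2 : 0 < A * (A * (A - lam ^ 2)) := by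
      apply mul_pos hApos; apply mul_pos hApos; linarith
    rw [div_mul_div_comm, div_lt_div_iff₀ h2 (by positivity)]
    have hcore : lam ^ 2 * (A * B - c ^ 2) < c ^ 2 * (A - lam ^ 2) := by
      nlinarith [mul_lt_mul_of_pos_right hkey hApos]
    nlinarith [mul_lt_mul_of_pos_left hcore (mul_pos hApos hApos)]
  refine ⟨hδ0, hδlt, ?_⟩
  have hxne : xls ≠ 0 := by
    rw [hxls]
    intro hcon
    have : c = 0 := by
      field_simp at hcon
      simpa using hcon
    rw [this] at hc2pos; simp at hc2pos
  have hsqrt : Real.sqrt δ < |xls| := by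
    have := Real.sqrt_lt_sqrt hδ0 hδlt
    rwa [Real.sqrt_sq_eq_abs] at this
  have hsq0 : 0 ≤ Real.sqrt δ := Real.sqrt_nonneg _
  rcases lt_trichotomy xls 0 with hx | hx | hx
  · rw [abs_of_neg hx] at hsqrt
    rw [Real.sign_of_neg hx, Real.sign_of_neg (by linarith), Real.sign_of_neg (by linarith)]
    exact ⟨rfl, rfl⟩
  · exact absurd hx hxne
  · rw [abs_of_pos hx] at hsqrt
    rw [Real.sign_of_pos hx, Real.sign_of_pos (by linarith), Real.sign_of_pos (by linarith)]
    exact ⟨rfl, rfl⟩
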